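/- Let V₁, …, V_d and W be C¹ vector fields on ℝ^e, let f = (f¹, …, f^d) : [0,T] → ℝ^d be C¹, let y : [0,T] → ℝ^e be a solution of the controlled ODE dy = Σᵢ Vᵢ(y) df^i started at y₀, and let J : [0,T] → L(ℝ^e, ℝ^e) be a differentiable path satisfying the backward Jacobian equation J′(t) = −J(t) ∘ (Σ_{i=1}^d (f^i)′(t) (DVᵢ)(y(t))). Then for every t ∈ [0,T] the map t ↦ J(t)(W(y(t))) is differentiable with derivative Σ_{i=1}^d (f^i)′(t) · J(t)([Vᵢ, W](y(t))). -/

import Mathlib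

open Set

/-- The Lie bracket of two vector fields on `ℝ^e`:
`[V, W](x) = (DW)(x)(V(x)) − (DV)(x)(W(x))`. -/
noncomputable def lieB {e : ℕ} (V W : (Fin e → ℝ) → (Fin e → ℝ)) (x : Fin e → ℝ) :
    Fin e → ℝ :=
  fderiv ℝ W x (V x) - fderiv ℝ V x (W x)

/-- Along a solution `y` of the controlled ODE `dy = Σᵢ Vᵢ(y) dfⁱ` and a solution `J` of the
backward Jacobian equation, the map `t ↦ J(t)(W(y(t)))` is differentiable with derivative
`Σᵢ (fⁱ)′(t) • J(t)([Vᵢ, W](y(t)))`. -/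
theorem stmt0 {d e : ℕ} (hd : 1 ≤ d) (he : 1 ≤ e) {T : ℝ} (hT : 0 < T)
    (V : Fin d → (Fin e → ℝ) → (Fin e → ℝ)) (W : (Fin e → ℝ) → (Fin e → ℝ))
    (hV : ∀ i, ContDiff ℝ 1 (V i)) (hW : ContDiff ℝ 1 W)
    (f f' : ℝ → Fin d → ℝ)
    (hf : ∀ t ∈ Icc (0 : ℝ) T, HasDerivWithinAt f (f' t) (Icc 0 T) t)
    (hf' : ContinuousOn f' (Icc 0 T))
    (y₀ : Fin e → ℝ) (y : ℝ → Fin e → ℝ) (hy0 : y 0 = y₀)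
    (hy : ∀ t ∈ Icc (0 : ℝ) T,
      HasDerivWithinAt y (∑ i, f' t i • V i (y t)) (Icc 0 T) t)
    (J : ℝ → (Fin e → ℝ) →L[ℝ] (Fin e → ℝ))
    (hJ : ∀ t ∈ Icc (0 : ℝ) T,
      HasDerivWithinAt J (-(J t).comp (∑ i, f' t i • fderiv ℝ (V i) (y t))) (Icc 0 T) t) :
    ∀ t ∈ Icc (0 : ℝ) T,
      HasDerivWithinAt (fun s => J s (W (y s)))
        (∑ i, f' t i • J t (lieB (V i) W (y t))) (Icc 0 T) t := by
  intro t ht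
  have hWy : HasDerivWithinAt (fun s => W (y s))
      (fderiv ℝ W (y t) (∑ i, f' t i • V i (y t))) (Icc 0 T) t :=
    (hW.differentiable one_ne_zero (y t)).hasFDerivAt.comp_hasDerivWithinAt t (hy t ht)
  have h := (hJ t ht).clm_apply hWy
  refine h.congr_deriv ?_
  simp only [lieB, ContinuousLinearMap.coe_comp', Function.comp_apply, map_sub, map_smul,
    ContinuousLinearMap.neg_apply, ContinuousLinearMap.sum_apply,
    ContinuousLinearMap.smul_apply, Finset.smul_sum, map_sum, smul_sub]
  rw [Finset.sum_sub_distrib]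
  abel
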